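/- arXiv:1106.0422 — 3 statements merged into one kernel-verified Lean document; each statement's English description precedes it below -/
import Mathlib

section
/- Let G be a group, φ : G → ℝ a homogeneous quasimorphism with defect D(φ) > 0, and x ∈ [G,G]. Then |φ(x)| ≤ 2·D(φ)·cl(x), and consequently scl(x) ≥ |φ(x)|/(2·D(φ)). -/
open scoped commutatorElement
/-- `x` is a product of `n` commutators. -/
def IsProdOfComms {G : Type*} [Group G] (x : G) (n : ℕ) : Prop :=
  ∃ f g : Fin n → G, x = (List.ofFn fun i => ⁅f i, g i⁆).prod

/-- The commutator length of `x`. -/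
noncomputable def cl {G : Type*} [Group G] (x : G) : ℕ :=
  sInf {n | IsProdOfComms x n}

/-- The stable commutator length of x ∈ [G,G]. -/
noncomputable def scl {G : Type*} [Group G] (x : G) : ℝ :=
  ⨅ n : ℕ+, (cl (x ^ (n : ℕ)) : ℝ) / (n : ℕ)

section Aux

variable {G : Type*} [Group G] (φ : G → ℝ) (D : ℝ)

lemma aux_one (hh : ∀ (x : G) (n : ℤ), φ (x ^ n) = n * φ x) : φ 1 = 0 := by
  simpa using hh 1 0

lemma aux_inv (hh : ∀ (x : G) (n : ℤ), φ (x ^ n) = n * φ x) (x : G) :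
    φ x⁻¹ = -φ x := by
  simpa using hh x (-1)

lemma aux_conj (hD : 0 < D)
    (hq : ∀ x y : G, |φ (x * y) - φ x - φ y| ≤ D)
    (hh : ∀ (x : G) (n : ℤ), φ (x ^ n) = n * φ x)
    (g a : G) : φ (g * a * g⁻¹) = φ a := by
  have key : ∀ n : ℕ, (n : ℝ) * |φ (g * a * g⁻¹) - φ a| ≤ 2 * D := by
    intro n
    have hpow : (g * a * g⁻¹) ^ (n : ℤ) = g * (a ^ (n : ℤ) * g⁻¹) := by
      rw [conj_zpow, mul_assoc]
    have h1 := abs_le.mp (hq g (a ^ (n : ℤ) * g⁻¹))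
    have h2 := abs_le.mp (hq (a ^ (n : ℤ)) g⁻¹)
    have h3 := hh (g * a * g⁻¹) (n : ℤ)
    have h4 := hh a (n : ℤ)
    have hinv := aux_inv φ hh g
    rw [hpow] at h3
    push_cast at h3 h4
    have habs : |(n : ℝ) * φ (g * a * g⁻¹) - (n : ℝ) * φ a| ≤ 2 * D := by
      rw [abs_le]
      constructor <;> linarith [h1.1, h1.2, h2.1, h2.2]
    rw [← mul_sub, abs_mul, Nat.abs_cast] at habs
    exact habs
  by_contra h
  have habs : 0 < |φ (g * a * g⁻¹) - φ a| := by
    rw [abs_pos, sub_ne_zero]; exact h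
  obtain ⟨n, hn⟩ := exists_nat_gt (2 * D / |φ (g * a * g⁻¹) - φ a|)
  have := key n
  rw [div_lt_iff₀ habs] at hn
  linarith

lemma aux_comm (hD : 0 < D)
    (hq : ∀ x y : G, |φ (x * y) - φ x - φ y| ≤ D)
    (hh : ∀ (x : G) (n : ℤ), φ (x ^ n) = n * φ x)
    (a b : G) : |φ ⁅a, b⁆| ≤ D := by
  have hc : ⁅a, b⁆ = (a * b * a⁻¹) * b⁻¹ := by
    rw [commutatorElement_def]
  have h1 := abs_le.mp (hq (a * b * a⁻¹) b⁻¹)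
  have h2 := aux_conj φ D hD hq hh a b
  have h3 := aux_inv φ hh b
  rw [hc, abs_le]
  constructor <;> linarith [h1.1, h1.2]

lemma aux_list (hD : 0 < D)
    (hq : ∀ x y : G, |φ (x * y) - φ x - φ y| ≤ D)
    (hh : ∀ (x : G) (n : ℤ), φ (x ^ n) = n * φ x)
    (l : List G) (hl : ∀ c ∈ l, |φ c| ≤ D) :
    |φ l.prod| ≤ 2 * D * l.length := by
  induction l with
  | nil => simp [aux_one φ hh]
  | cons c t ih =>
    have hc := hl c (List.mem_cons_self)
    have ht := ih (fun d hd => hl d (List.mem_cons_of_mem c hd))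
    have h1 := abs_le.mp (hq c t.prod)
    have hc' := abs_le.mp hc
    have ht' := abs_le.mp ht
    rw [List.prod_cons, List.length_cons]
    push_cast
    rw [abs_le]
    constructor <;> nlinarith

lemma aux_bound (hD : 0 < D)
    (hq : ∀ x y : G, |φ (x * y) - φ x - φ y| ≤ D)
    (hh : ∀ (x : G) (n : ℤ), φ (x ^ n) = n * φ x)
    (x : G) (n : ℕ) (hx : IsProdOfComms x n) : |φ x| ≤ 2 * D * n := by
  obtain ⟨f, g, rfl⟩ := hx
  have := aux_list φ D hD hq hh (List.ofFn fun i => ⁅f i, g i⁆) ?_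
  · simpa using this
  · intro c hc
    rw [List.mem_ofFn] at hc
    obtain ⟨i, rfl⟩ := hc
    exact aux_comm φ D hD hq hh (f i) (g i)

lemma aux_exists {x : G} (hx : x ∈ commutator G) : ∃ n, IsProdOfComms x n := by
  rw [commutator_eq_closure] at hx
  have hP : ∃ l : List G, (∀ c ∈ l, ∃ a b : G, c = ⁅a, b⁆) ∧ l.prod = x := by
    induction hx using Subgroup.closure_induction with
    | mem y hy =>
      obtain ⟨a, b, hab⟩ := hy
      exact ⟨[y], by simp [← hab], by simp⟩
    | one => exact ⟨[], by simp, by simp⟩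
    | mul y z _ _ hy hz =>
      obtain ⟨l1, h1, rfl⟩ := hy
      obtain ⟨l2, h2, rfl⟩ := hz
      refine ⟨l1 ++ l2, ?_, by simp⟩
      intro c hc
      rcases List.mem_append.mp hc with h | h
      · exact h1 c h
      · exact h2 c h
    | inv y _ hy =>
      obtain ⟨l, hl, rfl⟩ := hy
      refine ⟨(l.map fun c => c⁻¹).reverse, ?_, (List.prod_inv_reverse l).symm⟩
      intro c hc
      rw [List.mem_reverse, List.mem_map] at hc
      obtain ⟨d, hd, rfl⟩ := hc
      obtain ⟨a, b, rfl⟩ := hl d hd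
      exact ⟨b, a, commutatorElement_inv a b⟩
  obtain ⟨l, hl', rfl⟩ := hP
  choose f g hfg using fun i : Fin l.length => hl' (l.get i) (l.get_mem i)
  refine ⟨l.length, f, g, ?_⟩
  conv_lhs => rw [← List.ofFn_get l]
  exact congrArg (fun l => l.prod) (congrArg List.ofFn (funext hfg))

end Aux

/-- Easy direction of Bavard duality. -/
theorem bavard_easy_direction {G : Type*} [Group G] (φ : G → ℝ) (D : ℝ)
    (hD : 0 < D)
    (hq : ∀ x y : G, |φ (x * y) - φ x - φ y| ≤ D)
    (hh : ∀ (x : G) (n : ℤ), φ (x ^ n) = n * φ x)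
    (x : G) (hx : x ∈ commutator G) :
    |φ x| ≤ 2 * D * cl x ∧ |φ x| / (2 * D) ≤ scl x := by
  have main : ∀ y : G, y ∈ commutator G → |φ y| ≤ 2 * D * cl y := by
    intro y hy
    obtain ⟨n, hn⟩ := aux_exists hy
    have hmem : cl y ∈ {n | IsProdOfComms y n} := Nat.sInf_mem ⟨n, hn⟩
    exact aux_bound φ D hD hq hh y (cl y) hmem
  refine ⟨main x hx, ?_⟩
  rw [scl]
  refine le_ciInf fun n => ?_
  have hxn : x ^ (n : ℕ) ∈ commutator G := pow_mem hx _
  have h1 := main _ hxn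
  have h2 : φ (x ^ (n : ℕ)) = (n : ℕ) * φ x := by
    have := hh x ((n : ℕ) : ℤ)
    rwa [zpow_natCast, Int.cast_natCast] at this
  have hnpos : (0 : ℝ) < (n : ℕ) := by exact_mod_cast n.pos
  rw [div_le_div_iff₀ (by linarith) hnpos]
  have : |φ (x ^ (n : ℕ))| = (n : ℕ) * |φ x| := by
    rw [h2, abs_mul, abs_of_nonneg hnpos.le]
  nlinarith
end

section
/- Let G be a group and a, b ∈ G satisfying the braid relation aba = bab. Then (ba)⁶ = a²·(ba²b)²·a². -/
/-- The algebraic identity underlying the genus-2 relation. -/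
theorem genus_two_identity {G : Type*} [Group G] (a b : G) (hbraid : a * b * a = b * a * b) :
    (b * a) ^ 6 = a ^ 2 * (b * a ^ 2 * b) ^ 2 * a ^ 2 := by
  have h1 : ∀ x : G, a * (b * (a * x)) = b * (a * (b * x)) := by
    intro x
    calc a * (b * (a * x)) = (a * b * a) * x := by group
    _ = (b * a * b) * x := by rw [hbraid]
    _ = b * (a * (b * x)) := by group
  have h2 : ∀ x : G, b * (a * (b * x)) = a * (b * (a * x)) := fun x => (h1 x).symm
  simp only [pow_succ, pow_zero, one_mul, mul_assoc]
  rw [h2]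
  nth_rewrite 2 [h1]
  rw [h2]
  nth_rewrite 2 [h2]
  rfl
end

section
/- Let G be a group and a₁, a₂ ∈ G with a₁a₂a₁ = a₂a₁a₂, let s = (a₂a₁)⁶, and suppose s commutes with a₁ and a₂. Let φ : G → ℝ be a homogeneous quasimorphism with defect D(φ) and φ(a₁) = φ(a₂). Then D(φ) ≥ 6|φ(a₁)| − (1/2)|φ(s)|. -/
private lemma abs_mul_le_zero (c K : ℝ) (h : ∀ n : ℕ, (n : ℝ) * |c| ≤ K) : c = 0 := by
  by_contra hc
  have hc' : 0 < |c| := abs_pos.mpr hc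
  obtain ⟨n, hn⟩ := exists_nat_gt (K / |c|)
  have := h n
  rw [div_lt_iff₀ hc'] at hn
  linarith

/-- The genus-2 hyperelliptic relation forces D ≥ 6|φ(a₁)| − (1/2)|φ(s)|. -/
theorem genus_two_hyperelliptic_defect_bound {G : Type*} [Group G] (a₁ a₂ s : G)
    (hbraid : a₁ * a₂ * a₁ = a₂ * a₁ * a₂)
    (hs : s = (a₂ * a₁) ^ 6)
    (hs1 : s * a₁ = a₁ * s) (hs2 : s * a₂ = a₂ * s)
    (φ : G → ℝ) (D : ℝ)
    (hq : ∀ u v : G, |φ (u * v) - φ u - φ v| ≤ D)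
    (hh : ∀ (u : G) (n : ℤ), φ (u ^ n) = n * φ u)
    (e : φ a₁ = φ a₂) :
    6 * |φ a₁| - (1 / 2) * |φ s| ≤ D := by
  have hi : ∀ x : G, a₁ * (a₂ * (a₁ * x)) = a₂ * (a₁ * (a₂ * x)) := by
    intro x; rw [← mul_assoc, ← mul_assoc, hbraid, mul_assoc, mul_assoc]
  have hi2 : ∀ x : G, a₂ * (a₁ * (a₂ * x)) = a₁ * (a₂ * (a₁ * x)) := fun x => (hi x).symm
  have ht : a₁ * (a₂ * a₁) = a₂ * (a₁ * a₂) := by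
    rw [← mul_assoc, hbraid, mul_assoc]
  have ht2 : a₂ * (a₁ * a₂) = a₁ * (a₂ * a₁) := ht.symm
  -- key word identity
  have key : (a₂ * a₁) ^ 6 = a₁ ^ 2 * (a₂ * a₁ ^ 2 * a₂) ^ 2 * a₁ ^ 2 := by
    simp only [pow_succ, pow_zero, one_mul, mul_assoc]
    nth_rewrite 2 [hi]
    nth_rewrite 1 [hi2]
    nth_rewrite 1 [hi2]
    nth_rewrite 2 [hi2]
    rfl
  -- basics about φ
  have hnat : ∀ (u : G) (n : ℕ), φ (u ^ n) = n * φ u := by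
    intro u n
    have := hh u n
    rwa [zpow_natCast] at this
  have hcomm : ∀ x y : G, x * y = y * x → φ (x * y) = φ x + φ y := by
    intro x y hxy
    have hc : Commute x y := hxy
    have hz : φ (x * y) - φ x - φ y = 0 := by
      apply abs_mul_le_zero _ D
      intro n
      have h1 := hq (x ^ n) (y ^ n)
      rw [← hc.mul_pow, hnat, hnat, hnat] at h1
      calc (n : ℝ) * |φ (x * y) - φ x - φ y|
          = |(n:ℝ) * φ (x*y) - (n:ℝ) * φ x - (n:ℝ) * φ y| := by
            rw [show (n:ℝ) * φ (x*y) - (n:ℝ) * φ x - (n:ℝ) * φ y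
                  = (n:ℝ) * (φ (x*y) - φ x - φ y) by ring, abs_mul, Nat.abs_cast]
        _ ≤ D := h1
    linarith
  have hinv : ∀ u : G, φ u⁻¹ = -φ u := by
    intro u
    have := hh u (-1)
    simpa using this
  have hconj : ∀ g x : G, φ (g * x * g⁻¹) = φ x := by
    intro g x
    have hz : φ (g * x * g⁻¹) - φ x = 0 := by
      apply abs_mul_le_zero _ (D + D)
      intro n
      have hpow : (g * x * g⁻¹) ^ n = g * x ^ n * g⁻¹ := by
        rw [conj_pow]
      have h1 := hq (g * x ^ n) g⁻¹
      have h2 := hq g (x ^ n)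
      have h3 : φ ((g * x * g⁻¹) ^ n) = n * φ (g * x * g⁻¹) := hnat _ _
      rw [hpow] at h3
      have h4 : φ (x ^ n) = n * φ x := hnat _ _
      rw [hinv g] at h1
      calc (n : ℝ) * |φ (g * x * g⁻¹) - φ x|
          = |(n:ℝ) * φ (g * x * g⁻¹) - (n:ℝ) * φ x| := by
            rw [show (n:ℝ) * φ (g * x * g⁻¹) - (n:ℝ) * φ x
                  = (n:ℝ) * (φ (g * x * g⁻¹) - φ x) by ring, abs_mul, Nat.abs_cast]
        _ ≤ D + D := by
            rw [← h3, ← h4]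
            have hsplit : φ (g * x ^ n * g⁻¹) - φ (x ^ n)
                = (φ (g * x ^ n * g⁻¹) - φ (g * x ^ n) - (- φ g))
                  + (φ (g * x ^ n) - φ g - φ (x ^ n)) := by ring
            rw [hsplit]
            exact le_trans (abs_add_le _ _) (add_le_add h1 h2)
    linarith
  -- b := a₂ * a₁^2 * a₂
  set b := a₂ * a₁ ^ 2 * a₂ with hb
  -- φ b = φ (a₁^2 * a₂^2) by conjugation
  have hbconj : φ b = φ (a₁ ^ 2 * a₂ ^ 2) := by
    have : b = a₂ * (a₁ ^ 2 * a₂ ^ 2) * a₂⁻¹ := by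
      rw [hb]; group
    rw [this, hconj]
  -- b^2 = s * a₁⁻¹^4
  have hb2 : b ^ 2 = s * (a₁⁻¹) ^ 4 := by
    have hc : Commute a₁ s := (hs1).symm
    have h1 : s = a₁ ^ 2 * b ^ 2 * a₁ ^ 2 := by rw [hs, key]
    have : b ^ 2 = (a₁ ^ 2)⁻¹ * s * (a₁ ^ 2)⁻¹ := by
      rw [h1]; group
    rw [this]
    have hc2 : (a₁ ^ 2)⁻¹ * s = s * (a₁ ^ 2)⁻¹ := ((hc.pow_left 2).inv_left.eq).symm ▸ rfl
    calc (a₁ ^ 2)⁻¹ * s * (a₁ ^ 2)⁻¹ = s * (a₁ ^ 2)⁻¹ * (a₁ ^ 2)⁻¹ := by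
          rw [((hc.pow_left 2).inv_left).eq]
      _ = s * (a₁⁻¹) ^ 4 := by group
  have hcomm4 : s * (a₁⁻¹) ^ 4 = (a₁⁻¹) ^ 4 * s := by
    have hc : Commute s a₁ := hs1
    exact (hc.inv_right.pow_right 4).eq
  have hφb2 : 2 * φ b = φ s - 4 * φ a₁ := by
    have h1 : φ (b ^ 2) = 2 * φ b := by
      have := hnat b 2; simpa using this
    have h2 : φ (s * (a₁⁻¹) ^ 4) = φ s + φ ((a₁⁻¹) ^ 4) := hcomm _ _ hcomm4
    have h3 : φ ((a₁⁻¹) ^ 4) = -4 * φ a₁ := by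
      have := hnat (a₁⁻¹) 4
      rw [hinv] at this
      rw [this]; ring
    rw [← h1, hb2, h2, h3]; ring
  -- quasimorphism bound on a₁^2 * a₂^2
  have hq1 := hq (a₁ ^ 2) (a₂ ^ 2)
  have hA : φ (a₁ ^ 2) = 2 * φ a₁ := by have := hnat a₁ 2; simpa using this
  have hB : φ (a₂ ^ 2) = 2 * φ a₁ := by have := hnat a₂ 2; rw [← e] at this; simpa using this
  rw [hA, hB, ← hbconj] at hq1
  -- φ b = φ s / 2 - 2 φ a₁, so |φ s / 2 - 6 φ a₁| ≤ D
  have hfin : |φ s / 2 - 6 * φ a₁| ≤ D := by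
    have : φ s / 2 - 6 * φ a₁ = φ b - 2 * φ a₁ - 2 * φ a₁ := by linarith
    rw [this]; exact hq1
  have habs : |6 * φ a₁| - |φ s / 2| ≤ |φ s / 2 - 6 * φ a₁| := by
    have := abs_sub_abs_le_abs_sub (6 * φ a₁) (φ s / 2)
    rw [abs_sub_comm] at this
    exact this
  have h6 : |6 * φ a₁| = 6 * |φ a₁| := by rw [abs_mul]; norm_num
  have h2 : |φ s / 2| = (1/2) * |φ s| := by rw [abs_div]; norm_num; ring
  linarith [hfin, habs, h6.symm ▸ habs]
end
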